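/- Let φ and ψ be dual frames for H with upper bounds B_φ, B_ψ, and let m ∈ ℓ^∞ be contained in the closed disk of center μ ∈ ℂ and radius r ≥ 0 (i.e. |m_n − μ| ≤ r for all n). Then the spectrum of M_{m,φ,ψ} is contained in the closed disk of center μ with radius r · B_φ^{1/2} · B_ψ^{1/2}. -/

import Mathlib

open scoped InnerProductSpace

lemma my_tsum_cauchy_schwarz (a b : ℕ → ℝ) (ha : ∀ n, 0 ≤ a n) (hb : ∀ n, 0 ≤ b n)
    (hsa : Summable (fun n => a n ^ 2)) (hsb : Summable (fun n => b n ^ 2)) :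
    Summable (fun n => a n * b n) ∧
    ∑' n, a n * b n ≤ Real.sqrt (∑' n, a n ^ 2) * Real.sqrt (∑' n, b n ^ 2) := by
  have hsum : Summable (fun n => a n * b n) := by
    apply Summable.of_nonneg_of_le (fun n => mul_nonneg (ha n) (hb n))
      (fun n => ?_) ((hsa.add hsb).div_const 2)
    nlinarith [sq_nonneg (a n - b n)]
  refine ⟨hsum, hsum.tsum_le_of_sum_le fun s => ?_⟩
  have h1 : (∑ n ∈ s, a n * b n) ^ 2 ≤ (∑ n ∈ s, a n ^ 2) * ∑ n ∈ s, b n ^ 2 :=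
    Finset.sum_mul_sq_le_sq_mul_sq s a b
  have h2 : ∑ n ∈ s, a n ^ 2 ≤ ∑' n, a n ^ 2 := Summable.sum_le_tsum s (fun n _ => sq_nonneg _) hsa
  have h3 : ∑ n ∈ s, b n ^ 2 ≤ ∑' n, b n ^ 2 := Summable.sum_le_tsum s (fun n _ => sq_nonneg _) hsb
  have h4 : 0 ≤ ∑ n ∈ s, a n * b n :=
    Finset.sum_nonneg fun n _ => mul_nonneg (ha n) (hb n)
  have h5 : ∑ n ∈ s, a n * b n ≤ Real.sqrt ((∑ n ∈ s, a n ^ 2) * ∑ n ∈ s, b n ^ 2) := by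
    rw [show (∑ n ∈ s, a n * b n) = Real.sqrt ((∑ n ∈ s, a n * b n) ^ 2) by
      rw [Real.sqrt_sq h4]]
    exact Real.sqrt_le_sqrt h1
  refine h5.trans ?_
  rw [Real.sqrt_mul (Finset.sum_nonneg fun n _ => sq_nonneg _)]
  exact mul_le_mul (Real.sqrt_le_sqrt h2) (Real.sqrt_le_sqrt h3) (Real.sqrt_nonneg _)
    (Real.sqrt_nonneg _)

/-- for dual frames, if the symbol lies in the closed disk of center `μ` and
radius `r`, then the spectrum of the multiplier lies in the closed disk of center `μ` and
radius `r·Bφ^(1/2)·Bψ^(1/2)`. -/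
theorem spectrum_dual_frames_multiplier_subset_disk
    {H : Type*} [NormedAddCommGroup H] [InnerProductSpace ℂ H] [CompleteSpace H]
    (φ ψ : ℕ → H) (Aφ Bφ Aψ Bψ : ℝ) (hAφ : 0 < Aφ) (hAψ : 0 < Aψ)
    (hφ : ∀ f : H, ∃ s : ℝ, HasSum (fun n => ‖⟪φ n, f⟫_ℂ‖ ^ 2) s ∧
      Aφ * ‖f‖ ^ 2 ≤ s ∧ s ≤ Bφ * ‖f‖ ^ 2)
    (hψ : ∀ f : H, ∃ s : ℝ, HasSum (fun n => ‖⟪ψ n, f⟫_ℂ‖ ^ 2) s ∧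
      Aψ * ‖f‖ ^ 2 ≤ s ∧ s ≤ Bψ * ‖f‖ ^ 2)
    (hdual : ∀ f : H, HasSum (fun n => ⟪ψ n, f⟫_ℂ • φ n) f)
    (m : ℕ → ℂ) (mu : ℂ) (r : ℝ) (hr : 0 ≤ r) (hm : ∀ n, ‖m n - mu‖ ≤ r)
    (M : H →L[ℂ] H)
    (hM : ∀ f : H, HasSum (fun n => (m n * ⟪ψ n, f⟫_ℂ) • φ n) (M f)) :
    spectrum ℂ M ⊆ Metric.closedBall mu (r * Real.sqrt Bφ * Real.sqrt Bψ) := by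
  rcases subsingleton_or_nontrivial H with hH | hH
  · intro z hz
    exact absurd (isUnit_of_subsingleton _) hz
  -- upper bounds are nonnegative
  obtain ⟨f₀, hf₀⟩ := exists_ne (0 : H)
  have hf₀' : 0 < ‖f₀‖ := norm_pos_iff.mpr hf₀
  have hBφ : 0 ≤ Bφ := by
    obtain ⟨s, _, h1, h2⟩ := hφ f₀
    by_contra hneg
    push_neg at hneg
    nlinarith [mul_pos hAφ (pow_pos hf₀' 2), mul_pos (neg_pos.mpr hneg) (pow_pos hf₀' 2)]
  have hBψ : 0 ≤ Bψ := by
    obtain ⟨s, _, h1, h2⟩ := hψ f₀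
    by_contra hneg
    push_neg at hneg
    nlinarith [mul_pos hAψ (pow_pos hf₀' 2), mul_pos (neg_pos.mpr hneg) (pow_pos hf₀' 2)]
  set c := r * Real.sqrt Bφ * Real.sqrt Bψ with hc_def
  have hc : 0 ≤ c := by positivity
  have key : ∀ f g : H, ‖⟪g, M f - mu • f⟫_ℂ‖ ≤ c * ‖g‖ * ‖f‖ := by
    intro f g
    obtain ⟨sψ, hsψ, hsψ1, hsψ2⟩ := hψ f
    obtain ⟨sφ, hsφ, hsφ1, hsφ2⟩ := hφ g
    have h1 : HasSum (fun n => (m n * ⟪ψ n, f⟫_ℂ) * ⟪g, φ n⟫_ℂ) ⟪g, M f⟫_ℂ := by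
      have := (hM f).mapL (innerSL ℂ g)
      simpa [inner_smul_right] using this
    have h2 : HasSum (fun n => ⟪ψ n, f⟫_ℂ * ⟪g, φ n⟫_ℂ) ⟪g, f⟫_ℂ := by
      have := (hdual f).mapL (innerSL ℂ g)
      simpa [inner_smul_right] using this
    have h3 : HasSum (fun n => (m n - mu) * (⟪ψ n, f⟫_ℂ * ⟪g, φ n⟫_ℂ))
        (⟪g, M f - mu • f⟫_ℂ) := by
      rw [inner_sub_right, inner_smul_right]
      have := h1.sub (h2.mul_left mu)
      convert this using 2 with n
      rfl
      ring
    set a : ℕ → ℝ := fun n => ‖⟪ψ n, f⟫_ℂ‖ with ha_def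
    set b : ℕ → ℝ := fun n => ‖⟪g, φ n⟫_ℂ‖ with hb_def
    have ha : ∀ n, 0 ≤ a n := fun n => norm_nonneg _
    have hb : ∀ n, 0 ≤ b n := fun n => norm_nonneg _
    have hsa : Summable (fun n => a n ^ 2) := hsψ.summable
    have hsb : Summable (fun n => b n ^ 2) := by
      have : (fun n => b n ^ 2) = (fun n => ‖⟪φ n, g⟫_ℂ‖ ^ 2) := by
        funext n; rw [hb_def]; simp [norm_inner_symm]
      rw [this]; exact hsφ.summable
    obtain ⟨hsum_ab, hcs⟩ := my_tsum_cauchy_schwarz a b ha hb hsa hsb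
    have hta : ∑' n, a n ^ 2 = sψ := hsψ.tsum_eq
    have htb : ∑' n, b n ^ 2 = sφ := by
      have : (fun n => b n ^ 2) = (fun n => ‖⟪φ n, g⟫_ℂ‖ ^ 2) := by
        funext n; rw [hb_def]; simp [norm_inner_symm]
      rw [this]; exact hsφ.tsum_eq
    -- summability of norms of the terms
    have hterm : ∀ n, ‖(m n - mu) * (⟪ψ n, f⟫_ℂ * ⟪g, φ n⟫_ℂ)‖ ≤ r * (a n * b n) := by
      intro n
      rw [norm_mul, norm_mul]
      gcongr
      exact hm n
    have hsnorm : Summable (fun n => ‖(m n - mu) * (⟪ψ n, f⟫_ℂ * ⟪g, φ n⟫_ℂ)‖) :=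
      Summable.of_nonneg_of_le (fun n => norm_nonneg _) hterm (hsum_ab.mul_left r)
    calc ‖⟪g, M f - mu • f⟫_ℂ‖
        = ‖∑' n, (m n - mu) * (⟪ψ n, f⟫_ℂ * ⟪g, φ n⟫_ℂ)‖ := by rw [h3.tsum_eq]
      _ ≤ ∑' n, ‖(m n - mu) * (⟪ψ n, f⟫_ℂ * ⟪g, φ n⟫_ℂ)‖ := norm_tsum_le_tsum_norm hsnorm
      _ ≤ ∑' n, r * (a n * b n) := Summable.tsum_le_tsum hterm hsnorm (hsum_ab.mul_left r)
      _ = r * ∑' n, a n * b n := tsum_mul_left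
      _ ≤ r * (Real.sqrt (∑' n, a n ^ 2) * Real.sqrt (∑' n, b n ^ 2)) := by
          apply mul_le_mul_of_nonneg_left hcs hr
      _ ≤ r * (Real.sqrt (Bψ * ‖f‖ ^ 2) * Real.sqrt (Bφ * ‖g‖ ^ 2)) := by
          rw [hta, htb]
          have h1 : 0 ≤ sψ := hsψ.tsum_eq ▸ (hta ▸ tsum_nonneg (fun n => sq_nonneg (a n)))
          have h2 : 0 ≤ sφ := htb ▸ tsum_nonneg (fun n => sq_nonneg (b n))
          exact mul_le_mul_of_nonneg_left (mul_le_mul (Real.sqrt_le_sqrt hsψ2)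
            (Real.sqrt_le_sqrt hsφ2) (Real.sqrt_nonneg _) (Real.sqrt_nonneg _)) hr
      _ = c * ‖g‖ * ‖f‖ := by
          rw [Real.sqrt_mul hBψ, Real.sqrt_mul hBφ, Real.sqrt_sq (norm_nonneg f),
            Real.sqrt_sq (norm_nonneg g), hc_def]
          ring
  have hnorm : ‖M - mu • (1 : H →L[ℂ] H)‖ ≤ c := by
    apply ContinuousLinearMap.opNorm_le_bound _ hc
    intro f
    set x := (M - mu • (1 : H →L[ℂ] H)) f with hx_def
    have hx : x = M f - mu • f := by
      simp [hx_def]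
    have h4 : ‖x‖ ^ 2 ≤ c * ‖x‖ * ‖f‖ := by
      have h5 := key f x
      rw [← hx] at h5
      have h6 : ‖⟪x, x⟫_ℂ‖ = ‖x‖ ^ 2 := by
        rw [inner_self_eq_norm_sq_to_K]
        push_cast
        simp [norm_pow]
      calc ‖x‖ ^ 2 = ‖⟪x, x⟫_ℂ‖ := h6.symm
        _ ≤ c * ‖x‖ * ‖f‖ := h5
    rcases eq_or_lt_of_le (norm_nonneg x) with h | h
    · rw [← h]; positivity
    · nlinarith
  intro z hz
  have heq : M - mu • (1 : H →L[ℂ] H) = M - algebraMap ℂ (H →L[ℂ] H) mu := by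
    simp [Algebra.algebraMap_eq_smul_one]
  have hz' : z - mu ∈ spectrum ℂ (M - mu • (1 : H →L[ℂ] H)) := by
    rw [heq, ← spectrum.sub_singleton_eq]
    exact Set.sub_mem_sub hz rfl
  have hle := spectrum.norm_le_norm_of_mem hz'
  rw [Metric.mem_closedBall, dist_eq_norm]
  exact hle.trans hnorm
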